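/- Let β ∈ (0,1) and y > 0, and let (W_k)_{k≥1} and (V_k)_{k≥1} be random variables on a probability space (Ω, F, P) such that the family (W_1, V_1, W_2, V_2, …) is mutually independent, each W_k has the W-law with parameter β, and each V_k has the V-law with parameter β. Define M_k = y·∏_{j=1}^{k} W_j·V_j for k ≥ 1. Then almost surely M_k → 0 as k → ∞ and the series ∑_{k=1}^{∞} M_k converges (to a finite value). -/

import Mathlib

set_option maxHeartbeats 1000000
open MeasureTheory ProbabilityTheory Real Set Filter

lemma lintegral_prod_ofReal {Ω ι : Type*} [MeasureSpace Ω]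
    [IsProbabilityMeasure (ℙ : Measure Ω)] {g : ι → Ω → ℝ}
    (hm : ∀ i, Measurable (g i)) (hnn : ∀ i ω, 0 ≤ g i ω)
    (hInd : iIndepFun (m := fun _ : ι => Real.measurableSpace) g ℙ) (s : Finset ι) :
    ∫⁻ ω, ∏ i ∈ s, ENNReal.ofReal (g i ω) = ∏ i ∈ s, ∫⁻ ω, ENNReal.ofReal (g i ω) := by
  classical
  induction s using Finset.induction_on with
  | empty => simp
  | @insert i s hi ih =>
    have hprod : ∀ ω, ∏ j ∈ s, ENNReal.ofReal (g j ω)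
        = ENNReal.ofReal (∏ j ∈ s, g j ω) := by
      intro ω
      rw [ENNReal.ofReal_prod_of_nonneg (fun j _ => hnn j ω)]
    have hindep : IndepFun (fun ω => ∏ j ∈ s, g j ω) (g i) ℙ := by
      have := hInd.indepFun_finsetProd_of_notMem hm hi (s := s)
      simpa [Finset.prod_fn] using this
    have hindep' : IndepFun (fun ω => ENNReal.ofReal (g i ω))
        (fun ω => ENNReal.ofReal (∏ j ∈ s, g j ω)) ℙ :=
      hindep.symm.comp ENNReal.measurable_ofReal ENNReal.measurable_ofReal
    have hmi : Measurable fun ω => ENNReal.ofReal (g i ω) :=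
      ENNReal.measurable_ofReal.comp (hm i)
    have hms : Measurable fun ω => ENNReal.ofReal (∏ j ∈ s, g j ω) :=
      ENNReal.measurable_ofReal.comp (Finset.measurable_prod s (fun j _ => hm j))
    simp only [Finset.prod_insert hi]
    rw [← ih]
    calc ∫⁻ ω, ENNReal.ofReal (g i ω) * ∏ j ∈ s, ENNReal.ofReal (g j ω)
        = ∫⁻ ω, ENNReal.ofReal (g i ω) * ENNReal.ofReal (∏ j ∈ s, g j ω) := by
          simp_rw [hprod]
      _ = (∫⁻ ω, ENNReal.ofReal (g i ω)) * ∫⁻ ω, ENNReal.ofReal (∏ j ∈ s, g j ω) :=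
          lintegral_mul_eq_lintegral_mul_lintegral_of_indepFun hmi hms hindep'
      _ = (∫⁻ ω, ENNReal.ofReal (g i ω)) * ∫⁻ ω, ∏ j ∈ s, ENNReal.ofReal (g j ω) := by
          simp_rw [hprod]


lemma lintegral_sqrt_W {Ω : Type*} [MeasureSpace Ω] [IsProbabilityMeasure (ℙ : Measure Ω)]
    {β : ℝ} (hβ : β ∈ Set.Ioo (0:ℝ) 1) {X : Ω → ℝ} (hX : Measurable X)
    (h01 : ∀ᵐ ω, X ω ∈ Set.Icc (0:ℝ) 1)
    (hcdf : ∀ w ∈ Set.Icc (0:ℝ) 1, ℙ {ω | X ω ≤ w} = ENNReal.ofReal (w ^ ((1 - β) / (2 * β)))) :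
    ∫⁻ ω, ENNReal.ofReal (Real.sqrt (X ω)) = ENNReal.ofReal (1 - β) := by
  obtain ⟨hβ0, hβ1⟩ := hβ
  set q : ℝ := (1 - β) / β with hq_def
  have hq : 0 < q := div_pos (by linarith) hβ0
  have hmble : AEMeasurable (fun ω => Real.sqrt (X ω)) ℙ :=
    (Real.continuous_sqrt.measurable.comp hX).aemeasurable
  rw [lintegral_eq_lintegral_meas_lt ℙ (ae_of_all _ fun ω => Real.sqrt_nonneg _) hmble]
  have hsplit : Ioi (0:ℝ) = Ioc 0 1 ∪ Ioi 1 := (Ioc_union_Ioi_eq_Ioi zero_le_one).symm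
  rw [hsplit, lintegral_union measurableSet_Ioi (Set.Ioc_disjoint_Ioi le_rfl)]
  -- second piece is zero
  have h2 : ∫⁻ t in Ioi (1:ℝ), ℙ {a | t < Real.sqrt (X a)} = 0 := by
    rw [← lintegral_zero (μ := volume.restrict (Ioi (1:ℝ)))]
    refine setLIntegral_congr_fun measurableSet_Ioi (fun t ht => ?_)
    refine measure_mono_null (fun a ha => ?_) (ae_iff.mp h01)
    simp only [mem_setOf_eq] at ha ⊢
    intro hmem
    have : Real.sqrt (X a) ≤ 1 := Real.sqrt_le_one.mpr hmem.2
    exact absurd (lt_of_le_of_lt this ht) (not_lt.mpr (le_of_lt ha))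
  -- first piece
  have h1 : ∫⁻ t in Ioc (0:ℝ) 1, ℙ {a | t < Real.sqrt (X a)}
      = ∫⁻ t in Ioc (0:ℝ) 1, ENNReal.ofReal (1 - t ^ q) := by
    refine setLIntegral_congr_fun measurableSet_Ioc (fun t ht => ?_)
    have ht0 : 0 < t := ht.1
    have hset : {a | t < Real.sqrt (X a)} = {a | X a ≤ t ^ 2}ᶜ := by
      ext a; simp [Real.lt_sqrt ht0.le, not_le, compl_setOf, mem_setOf_eq]
    have hsq : t ^ 2 ∈ Set.Icc (0:ℝ) 1 := ⟨sq_nonneg t, by nlinarith [ht.2, ht0.le]⟩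
    have hrw : ((t:ℝ) ^ 2) ^ ((1 - β) / (2 * β)) = t ^ q := by
      rw [← Real.rpow_natCast t 2, ← Real.rpow_mul ht0.le]
      congr 1
      rw [hq_def]
      ring
    rw [hset, prob_compl_eq_one_sub (measurableSet_le hX measurable_const), hcdf _ hsq, hrw,
      ENNReal.ofReal_sub _ (Real.rpow_nonneg ht0.le q), ENNReal.ofReal_one]
  rw [h1, h2, add_zero]
  have hnn : 0 ≤ᵐ[volume.restrict (Ioc (0:ℝ) 1)] fun t => 1 - t ^ q := by
    refine (ae_restrict_iff' measurableSet_Ioc).mpr (ae_of_all _ fun t ht => ?_)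
    have h : t ^ q ≤ 1 := Real.rpow_le_one ht.1.le ht.2 hq.le
    show (0:ℝ) ≤ 1 - t ^ q
    linarith
  have hint : IntegrableOn (fun t => 1 - t ^ q) (Ioc (0:ℝ) 1) volume := by
    have h1 : IntervalIntegrable (fun t : ℝ => 1 - t ^ q) volume 0 1 :=
      (intervalIntegrable_const).sub (intervalIntegral.intervalIntegrable_rpow' (by linarith))
    exact (intervalIntegrable_iff_integrableOn_Ioc_of_le zero_le_one).mp h1
  rw [← ofReal_integral_eq_lintegral_ofReal hint hnn]
  congr 1
  rw [← intervalIntegral.integral_of_le zero_le_one,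
    intervalIntegral.integral_sub intervalIntegrable_const
      (intervalIntegral.intervalIntegrable_rpow' (by linarith)),
    intervalIntegral.integral_const, integral_rpow (Or.inl (by linarith))]
  rw [Real.one_rpow, Real.zero_rpow (by positivity)]
  have hq1 : q + 1 = 1 / β := by rw [hq_def, div_add_one hβ0.ne', sub_add_cancel]
  rw [hq1]
  field_simp
  simp


lemma lintegral_sqrt_V {Ω : Type*} [MeasureSpace Ω] [IsProbabilityMeasure (ℙ : Measure Ω)]
    {β : ℝ} (hβ : β ∈ Set.Ioo (0:ℝ) 1) {X : Ω → ℝ} (hX : Measurable X)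
    (h1 : ∀ᵐ ω, 1 ≤ X ω)
    (htail : ∀ v : ℝ, 1 ≤ v → ℙ {ω | v < X ω} = ENNReal.ofReal (v ^ (-(1 + β) / (2 * β)))) :
    ∫⁻ ω, ENNReal.ofReal (Real.sqrt (X ω)) = ENNReal.ofReal (1 + β) := by
  obtain ⟨hβ0, hβ1⟩ := hβ
  set m : ℝ := -(1 + β) / β with hm_def
  have hm : m < -1 := by
    rw [hm_def, div_lt_iff₀ hβ0]
    nlinarith
  have hmble : AEMeasurable (fun ω => Real.sqrt (X ω)) ℙ :=
    (Real.continuous_sqrt.measurable.comp hX).aemeasurable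
  rw [lintegral_eq_lintegral_meas_lt ℙ (ae_of_all _ fun ω => Real.sqrt_nonneg _) hmble]
  have hsplit : Ioi (0:ℝ) = Ioo 0 1 ∪ Ici 1 := (Ioo_union_Ici_eq_Ioi zero_lt_one).symm
  rw [hsplit, lintegral_union measurableSet_Ici ((Set.Iio_disjoint_Ici le_rfl).mono_left Set.Ioo_subset_Iio_self)]
  -- first piece = 1
  have hA : ∫⁻ t in Ioo (0:ℝ) 1, ℙ {a | t < Real.sqrt (X a)} = 1 := by
    have heq : ∫⁻ t in Ioo (0:ℝ) 1, ℙ {a | t < Real.sqrt (X a)}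
        = ∫⁻ _ in Ioo (0:ℝ) 1, 1 := by
      refine setLIntegral_congr_fun measurableSet_Ioo (fun t ht => ?_)
      have hfull : ℙ {a | 1 ≤ X a} = 1 := by
        rw [← prob_compl_eq_zero_iff (measurableSet_le measurable_const hX)]
        exact ae_iff.mp h1
      refine le_antisymm prob_le_one ?_
      calc (1:ENNReal) = ℙ {a | 1 ≤ X a} := hfull.symm
        _ ≤ ℙ {a | t < Real.sqrt (X a)} := by
            refine measure_mono fun a ha => ?_
            simp only [mem_setOf_eq] at ha ⊢
            have : (1:ℝ) ≤ Real.sqrt (X a) := Real.le_sqrt' one_pos |>.mpr (by simpa using ha)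
            linarith [ht.2]
    rw [heq, setLIntegral_one]
    simp [Real.volume_Ioo]
  -- second piece
  have hB : ∫⁻ t in Ici (1:ℝ), ℙ {a | t < Real.sqrt (X a)} = ENNReal.ofReal β := by
    rw [← setLIntegral_congr (Ioi_ae_eq_Ici (μ := volume) (a := (1:ℝ)))]
    have heq : ∫⁻ t in Ioi (1:ℝ), ℙ {a | t < Real.sqrt (X a)}
        = ∫⁻ t in Ioi (1:ℝ), ENNReal.ofReal (t ^ m) := by
      refine setLIntegral_congr_fun measurableSet_Ioi (fun t ht => ?_)
      have ht1 : (1:ℝ) < t := ht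
      have hset : {a | t < Real.sqrt (X a)} = {a | t ^ 2 < X a} := by
        ext a; simp [Real.lt_sqrt (by linarith : (0:ℝ) ≤ t)]
      have hsq1 : (1:ℝ) ≤ t ^ 2 := by nlinarith
      have hrw : ((t:ℝ) ^ 2) ^ (-(1 + β) / (2 * β)) = t ^ m := by
        rw [← Real.rpow_natCast t 2, ← Real.rpow_mul (by linarith)]
        congr 1
        rw [hm_def]
        ring
      rw [hset, htail _ hsq1, hrw]
    rw [heq, ← ofReal_integral_eq_lintegral_ofReal
        (integrableOn_Ioi_rpow_of_lt hm zero_lt_one)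
        ((ae_restrict_iff' measurableSet_Ioi).mpr (ae_of_all _ fun t ht =>
          Real.rpow_nonneg (by linarith [mem_Ioi.mp ht] : (0:ℝ) ≤ t) m))]
    rw [integral_Ioi_rpow_of_lt hm zero_lt_one]
    congr 1
    rw [Real.one_rpow]
    have : m + 1 = -(1/β) := by rw [hm_def]; field_simp; ring
    rw [this]
    field_simp
  rw [hA, hB, ← ENNReal.ofReal_one, ← ENNReal.ofReal_add zero_le_one hβ0.le]


/-- Let `(W_k)` and `(V_k)` be such that the whole family `(W_1, V_1, W_2, V_2, …)` is
mutually independent, each `W_k` has the W-law and each `V_k` the V-law with parameter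
`β ∈ (0,1)`. Then `M_k = y·∏_{j<k} W_j V_j → 0` a.s. and `∑_{k≥1} M_k` converges a.s. -/
theorem skew_martingale_tendsto_zero_and_summable {Ω : Type*} [MeasureSpace Ω]
    [IsProbabilityMeasure (ℙ : Measure Ω)]
    (β y : ℝ) (hβ : β ∈ Set.Ioo (0:ℝ) 1) (hy : 0 < y)
    (W V : ℕ → Ω → ℝ) (hWm : ∀ k, Measurable (W k)) (hVm : ∀ k, Measurable (V k))
    (hInd : iIndepFun (m := fun _ : ℕ × Bool => Real.measurableSpace)
      (fun p => if p.2 then W p.1 else V p.1) ℙ)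
    (hW01 : ∀ k, ∀ᵐ ω, W k ω ∈ Set.Icc (0:ℝ) 1)
    (hWcdf : ∀ k, ∀ w ∈ Set.Icc (0:ℝ) 1,
      ℙ {ω | W k ω ≤ w} = ENNReal.ofReal (w ^ ((1 - β) / (2 * β))))
    (hV1 : ∀ k, ∀ᵐ ω, 1 ≤ V k ω)
    (hVtail : ∀ k, ∀ v : ℝ, 1 ≤ v →
      ℙ {ω | v < V k ω} = ENNReal.ofReal (v ^ (-(1 + β) / (2 * β)))) :
    ∀ᵐ ω, Tendsto (fun k => y * ∏ j ∈ Finset.range k, (W j ω * V j ω)) atTop (nhds 0) ∧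
      Summable (fun k => y * ∏ j ∈ Finset.range (k + 1), (W j ω * V j ω)) := by
  classical
  obtain ⟨hβ0, hβ1⟩ := hβ
  set f : ℕ × Bool → Ω → ℝ := fun p => if p.2 then W p.1 else V p.1 with hf_def
  set g : ℕ × Bool → Ω → ℝ := fun p ω => Real.sqrt (f p ω) with hg_def
  have hfm : ∀ p, Measurable (f p) := by
    rintro ⟨j, b⟩
    cases b
    · simpa [hf_def] using hVm j
    · simpa [hf_def] using hWm j
  have hgm : ∀ p, Measurable (g p) := fun p =>
    Real.continuous_sqrt.measurable.comp (hfm p)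
  have hgnn : ∀ p ω, 0 ≤ g p ω := fun p ω => Real.sqrt_nonneg _
  have hgInd : iIndepFun (m := fun _ : ℕ × Bool => Real.measurableSpace) g ℙ :=
    hInd.comp (fun _ => Real.sqrt) (fun _ => Real.continuous_sqrt.measurable)
  -- expectation of each factor
  have Ig : ∀ p : ℕ × Bool, ∫⁻ ω, ENNReal.ofReal (g p ω)
      = ENNReal.ofReal (if p.2 then 1 - β else 1 + β) := by
    rintro ⟨j, b⟩
    cases b
    · simpa [hg_def, hf_def] using
        lintegral_sqrt_V (Ω := Ω) ⟨hβ0, hβ1⟩ (hVm j) (hV1 j) (hVtail j)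
    · simpa [hg_def, hf_def] using
        lintegral_sqrt_W (Ω := Ω) ⟨hβ0, hβ1⟩ (hWm j) (hW01 j) (hWcdf j)
  -- the ENNReal-valued partial products
  set F : ℕ → Ω → ENNReal := fun k ω => ENNReal.ofReal (Real.sqrt y) *
    ∏ j ∈ Finset.range k,
      (ENNReal.ofReal (Real.sqrt (W j ω)) * ENNReal.ofReal (Real.sqrt (V j ω))) with hF_def
  have hFm : ∀ k, Measurable (F k) := by
    intro k
    refine Measurable.const_mul (Finset.measurable_prod _ fun j _ => ?_) _
    exact (ENNReal.measurable_ofReal.comp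
        (Real.continuous_sqrt.measurable.comp (hWm j))).mul
      (ENNReal.measurable_ofReal.comp (Real.continuous_sqrt.measurable.comp (hVm j)))
  have hFval : ∀ k, ∫⁻ ω, F k ω
      = ENNReal.ofReal (Real.sqrt y) *
        (ENNReal.ofReal (1 - β) * ENNReal.ofReal (1 + β)) ^ k := by
    intro k
    have hrw : ∀ ω, ∏ j ∈ Finset.range k,
        (ENNReal.ofReal (Real.sqrt (W j ω)) * ENNReal.ofReal (Real.sqrt (V j ω)))
        = ∏ p ∈ Finset.range k ×ˢ (Finset.univ : Finset Bool),
            ENNReal.ofReal (g p ω) := by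
      intro ω
      rw [Finset.prod_product]
      refine Finset.prod_congr rfl fun j _ => ?_
      rw [Fintype.prod_bool]
      simp [hg_def, hf_def]
    simp only [hF_def]
    have hprodm : Measurable fun ω => ∏ j ∈ Finset.range k,
        (ENNReal.ofReal (Real.sqrt (W j ω)) * ENNReal.ofReal (Real.sqrt (V j ω))) := by
      refine Finset.measurable_prod _ fun j _ => Measurable.mul (f := fun ω => ENNReal.ofReal (Real.sqrt (W j ω)))
        (g := fun ω => ENNReal.ofReal (Real.sqrt (V j ω))) ?_ ?_
      · exact ENNReal.measurable_ofReal.comp (Real.continuous_sqrt.measurable.comp (hWm j))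
      · exact ENNReal.measurable_ofReal.comp (Real.continuous_sqrt.measurable.comp (hVm j))
    rw [lintegral_const_mul _ hprodm]
    congr 1
    simp_rw [hrw]
    rw [lintegral_prod_ofReal hgm hgnn hgInd]
    rw [Finset.prod_product]
    have : ∀ j, ∏ b : Bool, ∫⁻ ω, ENNReal.ofReal (g (j, b) ω)
        = ENNReal.ofReal (1 - β) * ENNReal.ofReal (1 + β) := by
      intro j
      rw [Fintype.prod_bool, Ig (j, true), Ig (j, false)]
      simp
    simp_rw [this]
    rw [Finset.prod_const, Finset.card_range]
  -- summability of the integrals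
  have hr_lt : ENNReal.ofReal (1 - β) * ENNReal.ofReal (1 + β) < 1 := by
    rw [← ENNReal.ofReal_mul (by linarith)]
    rw [show (1:ENNReal) = ENNReal.ofReal 1 by simp]
    rw [ENNReal.ofReal_lt_ofReal_iff one_pos]
    nlinarith
  have hsum_int : ∑' k, ∫⁻ ω, F k ω ≠ ⊤ := by
    simp_rw [hFval]
    rw [ENNReal.tsum_mul_left, ENNReal.tsum_geometric]
    refine ENNReal.mul_ne_top ENNReal.ofReal_ne_top ?_
    rw [Ne, ENNReal.inv_eq_top, tsub_eq_zero_iff_le]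
    exact fun h => absurd (lt_of_lt_of_le hr_lt h) (lt_irrefl _)
  have hfin : ∀ᵐ ω, ∑' k, F k ω < ⊤ := by
    refine ae_lt_top (by measurability) ?_
    rwa [lintegral_tsum fun k => (hFm k).aemeasurable]
  -- pointwise conclusion
  filter_upwards [hfin, ae_all_iff.2 hW01, ae_all_iff.2 hV1] with ω hfω hWω hVω
  set s : ℕ → ℝ := fun k => Real.sqrt y *
    ∏ j ∈ Finset.range k, (Real.sqrt (W j ω) * Real.sqrt (V j ω)) with hs_def
  have hsnn : ∀ k, 0 ≤ s k := by
    intro k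
    refine mul_nonneg (Real.sqrt_nonneg _) (Finset.prod_nonneg fun j _ =>
      mul_nonneg (Real.sqrt_nonneg _) (Real.sqrt_nonneg _))
  have hFs : ∀ k, F k ω = ENNReal.ofReal (s k) := by
    intro k
    rw [hs_def]
    rw [ENNReal.ofReal_mul (Real.sqrt_nonneg _),
      ENNReal.ofReal_prod_of_nonneg (fun j _ =>
        mul_nonneg (Real.sqrt_nonneg _) (Real.sqrt_nonneg _))]
    simp only [hF_def]
    congr 1
    refine Finset.prod_congr rfl fun j _ => ?_
    rw [ENNReal.ofReal_mul (Real.sqrt_nonneg _)]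
  have hSummable : Summable s := by
    have h1 : Summable fun k => (F k ω).toReal := ENNReal.summable_toReal hfω.ne
    refine h1.congr fun k => ?_
    rw [hFs k, ENNReal.toReal_ofReal (hsnn k)]
  have hMs : ∀ k, y * ∏ j ∈ Finset.range k, (W j ω * V j ω) = s k ^ 2 := by
    intro k
    have hterms : ∏ j ∈ Finset.range k, (W j ω * V j ω)
        = ∏ j ∈ Finset.range k, (Real.sqrt (W j ω) * Real.sqrt (V j ω)) ^ 2 := by
      refine Finset.prod_congr rfl fun j _ => ?_
      rw [mul_pow, Real.sq_sqrt (hWω j).1,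
        Real.sq_sqrt (le_trans zero_le_one (hVω j))]
    rw [hs_def, mul_pow, Real.sq_sqrt hy.le, ← Finset.prod_pow, hterms]
  constructor
  · have hs0 : Tendsto s atTop (nhds 0) := hSummable.tendsto_atTop_zero
    have h2 : Tendsto (fun k => s k ^ 2) atTop (nhds 0) := by
      have := hs0.mul hs0
      simp only [mul_zero] at this
      refine this.congr fun k => ?_
      rw [sq]
    exact h2.congr fun k => (hMs k).symm
  · have hM_le : ∀ k, s k ^ 2 ≤ (∑' j, s j) * s k := by
      intro k
      rw [sq]
      exact mul_le_mul_of_nonneg_right (hSummable.le_tsum k fun j _ => hsnn j) (hsnn k)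
    have hMsum : Summable (fun k => y * ∏ j ∈ Finset.range k, (W j ω * V j ω)) := by
      refine Summable.of_nonneg_of_le (fun k => ?_) (fun k => ?_) (hSummable.mul_left (∑' j, s j))
      · rw [hMs k]; exact sq_nonneg _
      · exact (hMs k).le.trans (hM_le k)
    exact (summable_nat_add_iff 1).mpr hMsum
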